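/- Octahedral Tucker lemma: Let s and n be positive integers. If there exists a map λ from {+,-,0}^n \ {0} to {±1,...,±s} such that λ(-x) = -λ(x) for all x, and λ(x) + λ(y) ≠ 0 whenever x ⪯ y, then s ≥ n. -/

import Mathlib

namespace OctTucker
attribute [local instance] Classical.propDecidable

/-- `S` is an `ε`-alternating set of size `k`. -/
def P (ε : ℤ) (k : ℕ) (S : Finset ℤ) : Prop :=
  ∃ b : Fin k → ℤ, StrictMono (fun i => |b i|) ∧ (∀ i : Fin k, 0 < ε * (-1) ^ (i : ℕ) * b i) ∧
    S = Finset.image b Finset.univ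

lemma strictMono_eq_of_image_eq {k : ℕ} {f g : Fin k → ℤ}
    (hf : StrictMono f) (hg : StrictMono g)
    (h : Finset.image f Finset.univ = Finset.image g Finset.univ) : f = g := by
  have hcard : (Finset.image f Finset.univ).card = k := by
    rw [Finset.card_image_of_injective _ hf.injective, Finset.card_univ, Fintype.card_fin]
  have h1 := Finset.orderEmbOfFin_unique hcard
    (f := f) (fun x => Finset.mem_image_of_mem _ (Finset.mem_univ x)) hf
  have h2 := Finset.orderEmbOfFin_unique hcard
    (f := g) (fun x => by rw [h]; exact Finset.mem_image_of_mem _ (Finset.mem_univ x)) hg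
  rw [h1, h2]

lemma P_card {ε : ℤ} {k : ℕ} {S : Finset ℤ} (h : P ε k S) : S.card = k := by
  obtain ⟨b, hb, _, rfl⟩ := h
  have : Function.Injective b := fun i j hij => hb.injective (by rw [hij])
  rw [Finset.card_image_of_injective _ this, Finset.card_univ, Fintype.card_fin]

/-- Characterization of `P` for a function already sorted by magnitudes. -/
lemma P_sorted_iff {ε : ℤ} {k : ℕ} {u : Fin k → ℤ} (hu : StrictMono fun i => |u i|) :
    P ε k (Finset.image u Finset.univ) ↔ ∀ i : Fin k, 0 < ε * (-1) ^ (i : ℕ) * u i := by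
  constructor
  · rintro ⟨b, hb, hsign, him⟩
    have habs : (fun i => |b i|) = fun i => |u i| := by
      apply strictMono_eq_of_image_eq hb hu
      have h1 : Finset.image (fun i => |b i|) Finset.univ
          = Finset.image (fun x : ℤ => |x|) (Finset.image b Finset.univ) := by
        rw [Finset.image_image]; rfl
      have h2 : Finset.image (fun i => |u i|) Finset.univ
          = Finset.image (fun x : ℤ => |x|) (Finset.image u Finset.univ) := by
        rw [Finset.image_image]; rfl
      rw [h1, h2, him]
    have hbu : b = u := by
      funext i
      have hbi : b i ∈ Finset.image u Finset.univ := by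
        rw [him]; exact Finset.mem_image_of_mem _ (Finset.mem_univ i)
      obtain ⟨l, _, hl⟩ := Finset.mem_image.1 hbi
      have habs_i : |b i| = |u i| := congrFun habs i
      have : |u l| = |u i| := by rw [hl, habs_i]
      have : l = i := hu.injective this
      rw [← hl, this]
    rw [← hbu]; exact hsign
  · intro hsign
    exact ⟨u, hu, hsign, rfl⟩

lemma P_neg {ε : ℤ} {k : ℕ} {S : Finset ℤ} :
    P ε k (Finset.image (fun x => -x) S) ↔ P (-ε) k S := by
  have key : ∀ (δ : ℤ) (T : Finset ℤ), P δ k T → P (-δ) k (Finset.image (fun x => -x) T) := by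
    rintro δ T ⟨b, hb, hsign, rfl⟩
    refine ⟨fun i => -(b i), by simpa using hb, fun i => ?_, ?_⟩
    · show 0 < -δ * (-1) ^ (i : ℕ) * -(b i)
      have := hsign i; nlinarith
    · rw [Finset.image_image]; rfl
  have hinv : ∀ T : Finset ℤ, Finset.image (fun x : ℤ => -x) (Finset.image (fun x : ℤ => -x) T) = T := by
    intro T
    rw [Finset.image_image]
    have : ((fun x : ℤ => -x) ∘ fun x : ℤ => -x) = id := by funext x; simp
    rw [this, Finset.image_id]
  constructor
  · intro h
    have := key _ _ h
    rw [hinv] at this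
    exact this
  · intro h
    simpa using key _ _ h

lemma P_not_both {k : ℕ} {S : Finset ℤ} (h1 : P 1 (k+1) S) (h2 : P (-1) (k+1) S) : False := by
  obtain ⟨b, hb, hbs, rfl⟩ := h1
  obtain ⟨c, hc, hcs, him⟩ := h2
  have habs : (fun i => |b i|) = fun i => |c i| := by
    apply strictMono_eq_of_image_eq hb hc
    have h1 : Finset.image (fun i => |b i|) Finset.univ
        = Finset.image (fun x : ℤ => |x|) (Finset.image b Finset.univ) := by
      rw [Finset.image_image]; rfl
    have h2 : Finset.image (fun i => |c i|) Finset.univ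
        = Finset.image (fun x : ℤ => |x|) (Finset.image c Finset.univ) := by
      rw [Finset.image_image]; rfl
    rw [h1, h2, him]
  have hc0 : c 0 ∈ Finset.image b Finset.univ := by
    rw [him]; exact Finset.mem_image_of_mem _ (Finset.mem_univ 0)
  obtain ⟨l, _, hl⟩ := Finset.mem_image.1 hc0
  have : |b l| = |b 0| := by
    rw [hl, congrFun habs 0]
  have : l = 0 := hb.injective this
  rw [this] at hl
  have hp := hbs 0
  have hn := hcs 0
  simp only [Fin.val_zero, pow_zero] at hp hn
  rw [← hl] at hn
  nlinarith


open Finset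

def pat (q : ℕ) : Bool := decide (Even q)

lemma pat_succ (q : ℕ) : pat (q + 1) = !pat q := by
  by_cases h : Even q <;> simp [pat, Nat.even_add_one, h]

/-- Membership characterization for the removal-set. -/
lemma mem_D_iff {m : ℕ} (t : Fin (m+1) → Bool) (j : Fin (m+1)) :
    (∀ i : Fin m, t (j.succAbove i) = pat (i : ℕ)) ↔
    (∀ q : Fin (m+1), (q < j → t q = pat (q : ℕ)) ∧ (j < q → t q = !pat (q : ℕ))) := by
  constructor
  · intro hj q
    constructor
    · intro hq
      have hqm : (q : ℕ) < m := by
        have := hq; rw [Fin.lt_def] at this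
        have := j.isLt; omega
      have : j.succAbove ⟨(q : ℕ), hqm⟩ = q := by
        rw [Fin.succAbove_of_castSucc_lt]
        · ext; simp
        · rw [Fin.lt_def]; simpa using hq
      have ht := hj ⟨(q : ℕ), hqm⟩
      rw [this] at ht
      exact ht
    · intro hq
      have hq1 : 1 ≤ (q : ℕ) := by
        rw [Fin.lt_def] at hq; omega
      have hqm : (q : ℕ) - 1 < m := by have := q.isLt; omega
      have hsa : j.succAbove ⟨(q : ℕ) - 1, hqm⟩ = q := by
        rw [Fin.succAbove_of_le_castSucc]
        · ext; simp; omega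
        · rw [Fin.le_def]; simp; rw [Fin.lt_def] at hq; omega
      have ht := hj ⟨(q : ℕ) - 1, hqm⟩
      rw [hsa] at ht
      rw [ht]
      obtain ⟨a, ha⟩ : ∃ a, (q : ℕ) = a + 1 := ⟨(q : ℕ) - 1, by omega⟩
      simp only [ha, Nat.add_sub_cancel, pat_succ, Bool.not_not]
  · intro h i
    rcases lt_or_ge (i.castSucc) j with hlt | hle
    · rw [Fin.succAbove_of_castSucc_lt j i hlt]
      simpa using (h i.castSucc).1 hlt
    · rw [Fin.succAbove_of_le_castSucc j i hle]
      have hlt : j < i.succ := lt_of_le_of_lt hle (show i.castSucc < i.succ from Fin.castSucc_lt_succ)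
      have := (h i.succ).2 hlt
      rw [this]
      have : ((i.succ : Fin (m+1)) : ℕ) = (i : ℕ) + 1 := by simp
      rw [this, pat_succ]
      simp

lemma bool_core (m : ℕ) (t : Fin (m+1) → Bool) :
    Odd ((univ.filter fun j : Fin (m+1) =>
      ∀ i : Fin m, t (j.succAbove i) = pat (i : ℕ)).card) ↔
    ((∀ i : Fin (m+1), t i = pat (i : ℕ)) ∨
     (∀ i : Fin (m+1), t i = !pat (i : ℕ))) := by
  set D := univ.filter fun j : Fin (m+1) =>
      ∀ i : Fin m, t (j.succAbove i) = pat (i : ℕ) with hD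
  have memD : ∀ j, j ∈ D ↔
      (∀ q : Fin (m+1), (q < j → t q = pat (q : ℕ)) ∧ (j < q → t q = !pat (q : ℕ))) := by
    intro j
    rw [hD, mem_filter]
    simp only [mem_univ, true_and]
    exact mem_D_iff t j
  have hpair : ∀ j ∈ D, ∀ j' ∈ D, ¬((j : ℕ) + 1 < (j' : ℕ)) := by
    intro j hj j' hj' hlt
    have hq : (⟨(j : ℕ) + 1, by have := j'.isLt; omega⟩ : Fin (m+1)) = _ := rfl
    set q : Fin (m+1) := ⟨(j : ℕ) + 1, by have := j'.isLt; omega⟩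
    have h1 : t q = !pat (q : ℕ) := ((memD j).1 hj q).2 (by rw [Fin.lt_def]; exact Nat.lt_succ_self _)
    have h2 : t q = pat (q : ℕ) := ((memD j').1 hj' q).1 (by rw [Fin.lt_def]; exact hlt)
    rw [h1] at h2
    exact (Bool.not_ne_self _) h2
  constructor
  · intro hodd
    have hne : D.Nonempty := by
      rcases D.eq_empty_or_nonempty with h | h
      · rw [h] at hodd; simp at hodd
      · exact h
    obtain ⟨j, hj⟩ := hne
    by_cases ht : t j = pat (j : ℕ)
    · by_cases hjm : (j : ℕ) = m
      · left
        intro q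
        rcases lt_trichotomy q j with h | h | h
        · exact ((memD j).1 hj q).1 h
        · rw [h]; exact ht
        · exfalso; rw [Fin.lt_def] at h; have := q.isLt; omega
      · exfalso
        set j1 : Fin (m+1) := ⟨(j : ℕ) + 1, by have := j.isLt; omega⟩ with hj1
        have hj1D : j1 ∈ D := by
          rw [memD]
          intro q
          constructor
          · intro hq
            rcases lt_trichotomy q j with h | h | h
            · exact ((memD j).1 hj q).1 h
            · rw [h]; exact ht
            · exfalso; rw [Fin.lt_def] at h hq; simp [hj1] at hq; omega
          · intro hq
            refine ((memD j).1 hj q).2 ?_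
            rw [Fin.lt_def] at hq ⊢; simp [hj1] at hq; omega
        have hDeq : D = {j, j1} := by
          apply Finset.ext
          intro j''
          simp only [mem_insert, mem_singleton]
          constructor
          · intro hj''
            have h1 := hpair j'' hj'' j1 hj1D
            have h2 := hpair j hj j'' hj''
            simp [hj1] at h1
            have : (j'' : ℕ) = (j : ℕ) ∨ (j'' : ℕ) = (j : ℕ) + 1 := by omega
            rcases this with h | h
            · left; ext; exact h
            · right; ext; simp [hj1]; exact h
          · rintro (rfl | rfl)
            · exact hj
            · exact hj1D
        rw [hDeq] at hodd
        have : j ≠ j1 := by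
          intro h; rw [Fin.ext_iff] at h; simp [hj1] at h
        rw [Finset.card_insert_of_notMem (by simpa using this), Finset.card_singleton] at hodd
        exact absurd hodd (by decide)
    · have ht' : t j = !pat (j : ℕ) := by
        cases h1 : t j <;> cases h2 : pat (j : ℕ) <;> simp_all
      by_cases hj0 : (j : ℕ) = 0
      · right
        intro q
        rcases lt_trichotomy q j with h | h | h
        · exfalso; rw [Fin.lt_def] at h; omega
        · rw [h]; exact ht'
        · exact ((memD j).1 hj q).2 h
      · exfalso
        set j0 : Fin (m+1) := ⟨(j : ℕ) - 1, by have := j.isLt; omega⟩ with hj0'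
        have hj0D : j0 ∈ D := by
          rw [memD]
          intro q
          constructor
          · intro hq
            refine ((memD j).1 hj q).1 ?_
            rw [Fin.lt_def] at hq ⊢; simp [hj0'] at hq; omega
          · intro hq
            rcases lt_trichotomy q j with h | h | h
            · exfalso; rw [Fin.lt_def] at h hq; simp [hj0'] at hq; omega
            · rw [h]; exact ht'
            · exact ((memD j).1 hj q).2 h
        have hDeq : D = {j0, j} := by
          apply Finset.ext
          intro j''
          simp only [mem_insert, mem_singleton]
          constructor
          · intro hj''
            have h1 := hpair j'' hj'' j hj
            have h2 := hpair j0 hj0D j'' hj''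
            simp [hj0'] at h2
            have : (j'' : ℕ) = (j : ℕ) - 1 ∨ (j'' : ℕ) = (j : ℕ) := by omega
            rcases this with h | h
            · left; ext; simp [hj0']; exact h
            · right; ext; exact h
          · rintro (rfl | rfl)
            · exact hj0D
            · exact hj
        rw [hDeq] at hodd
        have : j0 ≠ j := by
          intro h; rw [Fin.ext_iff] at h; simp [hj0'] at h; omega
        rw [Finset.card_insert_of_notMem (by simpa using this), Finset.card_singleton] at hodd
        exact absurd hodd (by decide)
  · rintro (hp | hm')
    · have hDeq : D = {Fin.last m} := by
        apply Finset.ext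
        intro j
        simp only [mem_singleton]
        rw [memD]
        constructor
        · intro h
          by_contra hne
          have hlt : j < Fin.last m := lt_of_le_of_ne (Fin.le_last j) hne
          have h2 := (h (Fin.last m)).2 hlt
          rw [hp (Fin.last m)] at h2
          exact absurd h2 (by simp [Bool.eq_not_self])
        · rintro rfl
          intro q
          refine ⟨fun _ => hp q, fun hq => ?_⟩
          exfalso
          exact absurd hq (by rw [Fin.lt_def]; have := q.isLt; simp; omega)
      rw [hDeq, Finset.card_singleton]
      exact odd_one
    · have hDeq : D = {(0 : Fin (m+1))} := by
        apply Finset.ext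
        intro j
        simp only [mem_singleton]
        rw [memD]
        constructor
        · intro h
          by_contra hne
          have hlt : (0 : Fin (m+1)) < j := by
            rw [Fin.lt_def]
            have : (j : ℕ) ≠ 0 := fun hc => hne (Fin.ext (by simpa using hc))
            rw [Fin.val_zero]; omega
          have := (h 0).1 hlt
          rw [hm' 0] at this
          exact absurd this (by simp [Bool.eq_not_self])
        · rintro rfl
          intro q
          refine ⟨fun hq => absurd hq (by rw [Fin.lt_def]; simp), fun _ => hm' q⟩
      rw [hDeq, Finset.card_singleton]
      exact odd_one

lemma image_comp_succAbove {m : ℕ} (w : Fin (m+1) → ℤ) (j : Fin (m+1)) :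
    Finset.image (w ∘ j.succAbove) Finset.univ = Finset.image w (Finset.univ.erase j) := by
  have h1 : Finset.image (w ∘ j.succAbove) Finset.univ
      = (Finset.univ.image j.succAbove).image w := by
    rw [Finset.image_image]
  rw [h1, Fin.image_succAbove_univ, Finset.compl_singleton]

lemma P_image_inj {ε : ℤ} {k : ℕ} {w : Fin k → ℤ}
    (h : P ε k (Finset.image w Finset.univ)) : Function.Injective w := by
  have hc := P_card h
  have hinj : Set.InjOn w (Finset.univ : Finset (Fin k)) := by
    apply Finset.injOn_of_card_image_eq
    rw [hc, Finset.card_univ, Fintype.card_fin]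
  intro a b hab
  exact hinj (by simp) (by simp) hab

lemma image_univ_perm {k : ℕ} (v : Fin k → ℤ) (π : Equiv.Perm (Fin k)) :
    Finset.image (v ∘ π) Finset.univ = Finset.image v Finset.univ := by
  ext x
  simp only [Finset.mem_image, Finset.mem_univ, true_and, Function.comp_apply]
  constructor
  · rintro ⟨i, rfl⟩; exact ⟨π i, rfl⟩
  · rintro ⟨i, rfl⟩; exact ⟨π.symm i, by simp⟩

lemma image_erase_eq_of_dup {k : ℕ} (v : Fin k → ℤ) {a b : Fin k} (hab : a ≠ b)
    (hv : v a = v b) :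
    Finset.image v (Finset.univ.erase a) = Finset.image v (Finset.univ.erase b) := by
  ext x
  simp only [Finset.mem_image, Finset.mem_erase, Finset.mem_univ, and_true]
  constructor
  · rintro ⟨i, hia, rfl⟩
    by_cases hib : i = b
    · exact ⟨a, hab, by rw [hv, ← hib]⟩
    · exact ⟨i, hib, rfl⟩
  · rintro ⟨i, hib, rfl⟩
    by_cases hia : i = a
    · exact ⟨b, hab.symm, by rw [← hv, ← hia]⟩
    · exact ⟨i, hia, rfl⟩

lemma alt_sign_iff (q : ℕ) {w : ℤ} (hw : w ≠ 0) :
    (0 < 1 * (-1 : ℤ) ^ q * w) ↔ (decide (0 < w) = pat q) := by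
  by_cases h : Even q
  · rw [h.neg_one_pow]
    simp [pat, h] <;> omega
  · rw [(Nat.not_even_iff_odd.1 h).neg_one_pow]
    simp [pat, h] <;> omega

lemma alt_sign_iff' (q : ℕ) {w : ℤ} (hw : w ≠ 0) :
    (0 < (-1 : ℤ) * (-1 : ℤ) ^ q * w) ↔ (decide (0 < w) = !pat q) := by
  by_cases h : Even q
  · rw [h.neg_one_pow]
    simp [pat, h] <;> omega
  · rw [(Nat.not_even_iff_odd.1 h).neg_one_pow]
    simp [pat, h] <;> omega

lemma perFacet (m : ℕ) (v : Fin (m+1) → ℤ) (hv : ∀ i j, v i + v j ≠ 0) :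
    Odd ((univ.filter fun j : Fin (m+1) =>
        P 1 m (Finset.image (v ∘ j.succAbove) Finset.univ)).card) ↔
    (P 1 (m+1) (Finset.image v Finset.univ) ∨ P (-1) (m+1) (Finset.image v Finset.univ)) := by
  have hvne : ∀ i, v i ≠ 0 := by
    intro i hi
    exact hv i i (by rw [hi]; ring)
  have habs_eq : ∀ i j, |v i| = |v j| → v i = v j := by
    intro i j hij
    rcases abs_eq_abs.1 hij with h | h
    · exact h
    · exact absurd (by rw [h]; ring) (hv i j)
  by_cases hinj : Function.Injective fun i => |v i|
  · -- injective case
    set π₀ := Tuple.sort (fun i => |v i|) with hπ₀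
    set u := v ∘ π₀ with hu_def
    have hu : StrictMono fun i => |u i| := by
      apply Monotone.strictMono_of_injective
      · exact Tuple.monotone_sort (fun i => |v i|)
      · exact hinj.comp π₀.injective
    have huniv : Finset.image (⇑π₀) Finset.univ = Finset.univ := by
      ext x
      simp only [Finset.mem_image, Finset.mem_univ, true_and, iff_true]
      exact ⟨π₀.symm x, by simp⟩
    have hune : ∀ i, u i ≠ 0 := fun i => hvne (π₀ i)
    have himage_u : ∀ j : Fin (m+1),
        Finset.image (u ∘ j.succAbove) Finset.univ
          = Finset.image v (Finset.univ.erase (π₀ j)) := by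
      intro j
      rw [image_comp_succAbove]
      show Finset.image (v ∘ ⇑π₀) (Finset.univ.erase j) = _
      rw [← Finset.image_image, Finset.image_erase π₀.injective, huniv]
    have hcard_eq : (univ.filter fun j : Fin (m+1) =>
          P 1 m (Finset.image (v ∘ j.succAbove) Finset.univ)).card
        = (univ.filter fun j : Fin (m+1) =>
          P 1 m (Finset.image (u ∘ j.succAbove) Finset.univ)).card := by
      apply Finset.card_bij (fun j _ => π₀.symm j)
      · intro j hj
        rw [Finset.mem_filter] at hj ⊢
        refine ⟨Finset.mem_univ _, ?_⟩
        rw [himage_u, Equiv.apply_symm_apply, ← image_comp_succAbove]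
        exact hj.2
      · intro a _ b _ h
        exact π₀.symm.injective h
      · intro j' hj'
        rw [Finset.mem_filter] at hj'
        refine ⟨π₀ j', Finset.mem_filter.2 ⟨Finset.mem_univ _, ?_⟩, by simp⟩
        rw [image_comp_succAbove]
        rw [himage_u] at hj'
        exact hj'.2
    rw [hcard_eq]
    set t : Fin (m+1) → Bool := fun i => decide (0 < u i) with ht
    have hmem : ∀ j : Fin (m+1),
        P 1 m (Finset.image (u ∘ j.succAbove) Finset.univ)
          ↔ ∀ i : Fin m, t (j.succAbove i) = pat (i : ℕ) := by
      intro j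
      have hsm : StrictMono fun i : Fin m => |(u ∘ j.succAbove) i| :=
        fun a b hab => hu (Fin.strictMono_succAbove j hab)
      rw [show Finset.image (u ∘ j.succAbove) Finset.univ
            = Finset.image (fun i => (u ∘ j.succAbove) i) Finset.univ from rfl]
      rw [P_sorted_iff hsm]
      apply forall_congr'
      intro i
      exact alt_sign_iff (i : ℕ) (hvne _)
    have hfilter : (univ.filter fun j : Fin (m+1) =>
          P 1 m (Finset.image (u ∘ j.succAbove) Finset.univ))
        = (univ.filter fun j : Fin (m+1) =>
          ∀ i : Fin m, t (j.succAbove i) = pat (i : ℕ)) := by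
      apply Finset.filter_congr
      intro j _
      exact hmem j
    rw [hfilter]
    have himv : Finset.image v Finset.univ = Finset.image u Finset.univ :=
      (image_univ_perm v π₀).symm
    rw [himv, bool_core]
    constructor
    · rintro (h | h)
      · left
        rw [P_sorted_iff hu]
        intro i
        rw [alt_sign_iff (i : ℕ) (hune i)]
        exact h i
      · right
        rw [P_sorted_iff hu]
        intro i
        rw [alt_sign_iff' (i : ℕ) (hune i)]
        exact h i
    · rintro (h | h)
      · left
        intro i
        rw [show t i = decide (0 < u i) from rfl, ← alt_sign_iff (i : ℕ) (hune i)]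
        exact (P_sorted_iff hu).1 h i
      · right
        intro i
        rw [show t i = decide (0 < u i) from rfl, ← alt_sign_iff' (i : ℕ) (hune i)]
        exact (P_sorted_iff hu).1 h i
  · -- non-injective case: both sides are false
    obtain ⟨a, b, hab', hne⟩ : ∃ a b, |v a| = |v b| ∧ a ≠ b := by
      rw [Function.not_injective_iff] at hinj
      obtain ⟨a, b, h1, h2⟩ := hinj
      exact ⟨a, b, h1, h2⟩
    have hvab : v a = v b := habs_eq _ _ hab'
    have hconc : ∀ ε, ¬ P ε (m+1) (Finset.image v Finset.univ) := by
      intro ε hP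
      have hvinj := P_image_inj hP
      have : (fun i => |v i|) a = (fun i => |v i|) b → a = b := by
        intro h
        exact hvinj (habs_eq a b h)
      exact hne (hvinj hvab)
    constructor
    · intro hodd
      exfalso
      set D := univ.filter fun j : Fin (m+1) =>
        P 1 m (Finset.image (v ∘ j.succAbove) Finset.univ) with hD
      have hsub : ∀ j ∈ D, j = a ∨ j = b := by
        intro j hj
        rw [hD, Finset.mem_filter] at hj
        have hwinj := P_image_inj hj.2
        by_contra hcon
        push_neg at hcon
        obtain ⟨ia, hia⟩ := Fin.exists_succAbove_eq (x := a) (y := j) (fun h => hcon.1 h.symm)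
        obtain ⟨ib, hib⟩ := Fin.exists_succAbove_eq (x := b) (y := j) (fun h => hcon.2 h.symm)
        have : ia ≠ ib := fun h => hne (by rw [← hia, ← hib, h])
        exact this (hwinj (by simp only [Function.comp_apply, hia, hib]; exact hvab))
      have hiff : ∀ j j' : Fin (m+1), j ≠ j' → v j = v j' → (j ∈ D ↔ j' ∈ D) := by
        intro j j' hjj' hvv
        rw [hD, Finset.mem_filter, Finset.mem_filter]
        rw [image_comp_succAbove, image_comp_succAbove,
          image_erase_eq_of_dup v hjj' hvv]
        simp
      have hnonempty : D.Nonempty := by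
        rcases D.eq_empty_or_nonempty with h | h
        · rw [h] at hodd; simp at hodd
        · exact h
      obtain ⟨j, hj⟩ := hnonempty
      have hjab := hsub j hj
      have haD : a ∈ D := by
        rcases hjab with rfl | rfl
        · exact hj
        · exact (hiff a j hne hvab).2 hj
      have hbD : b ∈ D := (hiff a b hne hvab).1 haD
      have hDeq : D = {a, b} := by
        apply Finset.ext
        intro x
        simp only [Finset.mem_insert, Finset.mem_singleton]
        constructor
        · exact hsub x
        · rintro (rfl | rfl)
          · exact haD
          · exact hbD
      rw [hDeq] at hodd
      rw [Finset.card_insert_of_notMem (by simpa using hne), Finset.card_singleton] at hodd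
      exact absurd hodd (by decide)
    · rintro (h | h)
      · exact absurd h (hconc 1)
      · exact absurd h (hconc (-1))


lemma cast_eq_one_iff_odd (c : ℕ) : ((c : ZMod 2) = 1) ↔ Odd c := by
  rw [Nat.odd_iff, ← ZMod.natCast_mod c 2]
  rcases Nat.mod_two_eq_zero_or_one c with h | h <;> rw [h]
  · exact ⟨fun hc => absurd hc (by decide), fun hc => by omega⟩
  · exact ⟨fun _ => rfl, fun _ => rfl⟩

lemma cast_eq_zero_iff_even (c : ℕ) : ((c : ZMod 2) = 0) ↔ ¬ Odd c := by
  rw [Nat.odd_iff, ← ZMod.natCast_mod c 2]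
  rcases Nat.mod_two_eq_zero_or_one c with h | h <;> rw [h]
  · exact ⟨fun _ => by omega, fun _ => rfl⟩
  · exact ⟨fun hc => absurd hc (by decide), fun hc => by omega⟩

variable {n : ℕ}

def xvec (m : ℕ) (σ : Equiv.Perm (Fin m)) (ρ : Fin m → Bool) (j : Fin m) :
    Fin n → SignType := fun i =>
  if h : (i : ℕ) < m then
    (if σ.symm ⟨(i : ℕ), h⟩ ≤ j then (if ρ ⟨(i : ℕ), h⟩ then SignType.pos else SignType.neg)
      else 0)
  else 0

lemma xvec_ne_zero {m : ℕ} (hm : m ≤ n) (σ : Equiv.Perm (Fin m)) (ρ : Fin m → Bool)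
    (j : Fin m) : xvec m σ ρ j ≠ (0 : Fin n → SignType) := by
  intro h0
  have hlt : ((σ j : ℕ)) < n := lt_of_lt_of_le (σ j).isLt hm
  have hcf := congrFun h0 ⟨(σ j : ℕ), hlt⟩
  rw [xvec] at hcf
  simp only [Pi.zero_apply] at hcf
  rw [dif_pos (σ j).isLt] at hcf
  have hσ : σ.symm ⟨(σ j : ℕ), (σ j).isLt⟩ = j := by
    have h : (⟨(σ j : ℕ), (σ j).isLt⟩ : Fin m) = σ j := by ext; rfl
    rw [h, Equiv.symm_apply_apply]
  rw [hσ, if_pos le_rfl] at hcf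
  rcases hb : ρ ⟨(σ j : ℕ), (σ j).isLt⟩ <;> rw [hb] at hcf <;> simp at hcf

lemma xvec_prec {m : ℕ} (σ : Equiv.Perm (Fin m)) (ρ : Fin m → Bool) {j j' : Fin m}
    (hjj : j ≤ j') (c : Fin n) (hc : xvec m σ ρ j c ≠ 0) :
    xvec m σ ρ j c = xvec m σ ρ j' c := by
  rw [xvec] at hc ⊢
  by_cases h : (c : ℕ) < m
  · rw [dif_pos h] at hc ⊢
    by_cases h2 : σ.symm ⟨(c : ℕ), h⟩ ≤ j
    · rw [if_pos h2, xvec, dif_pos h, if_pos (le_trans h2 hjj)]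
    · rw [if_neg h2] at hc; exact absurd rfl hc
  · rw [dif_neg h] at hc; exact absurd rfl hc

lemma xvec_neg {m : ℕ} (σ : Equiv.Perm (Fin m)) (ρ : Fin m → Bool) (j : Fin m) :
    xvec (n := n) m σ (fun k => !ρ k) j = - xvec m σ ρ j := by
  funext i
  rw [Pi.neg_apply, xvec, xvec]
  by_cases h : (i : ℕ) < m
  · rw [dif_pos h, dif_pos h]
    by_cases h2 : σ.symm ⟨(i : ℕ), h⟩ ≤ j
    · rw [if_pos h2, if_pos h2]
      rcases hb : ρ ⟨(i : ℕ), h⟩ <;> simp [hb]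
    · rw [if_neg h2, if_neg h2]; rfl
  · rw [dif_neg h, dif_neg h]; rfl

def val (lam : (Fin n → SignType) → ℤ) (m : ℕ) (σ : Equiv.Perm (Fin m)) (ρ : Fin m → Bool)
    (j : Fin m) : ℤ := lam (xvec m σ ρ j)

def alt (lam : (Fin n → SignType) → ℤ) (ε : ℤ) (m : ℕ)
    (F : Equiv.Perm (Fin m) × (Fin m → Bool)) : Prop :=
  P ε m (Finset.image (val lam m F.1 F.2) Finset.univ)

noncomputable def A (lam : (Fin n → SignType) → ℤ) (m : ℕ) : ℕ :=
  (Finset.univ.filter (alt lam 1 m)).card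

def door (lam : (Fin n → SignType) → ℤ) {m : ℕ}
    (F : Equiv.Perm (Fin (m+1)) × (Fin (m+1) → Bool)) (j : Fin (m+1)) : Prop :=
  P 1 m (Finset.image (val lam (m+1) F.1 F.2 ∘ j.succAbove) Finset.univ)

def Hp {m : ℕ} (F : Equiv.Perm (Fin (m+1)) × (Fin (m+1) → Bool)) : Prop :=
  F.2 (Fin.last m) = true

def intr {m : ℕ} (a : (Equiv.Perm (Fin (m+1)) × (Fin (m+1) → Bool)) × Fin (m+1)) : Prop :=
  (a.2 : ℕ) < m ∨ a.1.1 (Fin.last m) ≠ Fin.last m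

lemma A_zero (lam : (Fin n → SignType) → ℤ) : A lam 0 = 1 := by
  unfold A
  rw [Finset.filter_true_of_mem]
  · rw [Finset.card_univ, Fintype.card_prod, Fintype.card_perm, Fintype.card_fun]
    simp
  · intro F _
    exact ⟨Fin.elim0, fun i => i.elim0, fun i => i.elim0, by simp⟩

lemma val_add_ne (lam : (Fin n → SignType) → ℤ)
    (hcomp : ∀ x y : Fin n → SignType, x ≠ 0 →
      (∀ i, x i ≠ 0 → x i = y i) → lam x + lam y ≠ 0)
    {m : ℕ} (hm : m ≤ n) (σ : Equiv.Perm (Fin m)) (ρ : Fin m → Bool)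
    (i j : Fin m) : val lam m σ ρ i + val lam m σ ρ j ≠ 0 := by
  rcases le_total i j with h | h
  · exact hcomp _ _ (xvec_ne_zero hm σ ρ i) (fun c => xvec_prec σ ρ h c)
  · rw [add_comm]
    exact hcomp _ _ (xvec_ne_zero hm σ ρ j) (fun c => xvec_prec σ ρ h c)

lemma xvec_swap {m : ℕ} (σ : Equiv.Perm (Fin (m+1))) (ρ : Fin (m+1) → Bool)
    (j : Fin (m+1)) (hj : (j : ℕ) < m) (k : Fin (m+1)) (hk : k ≠ j) :
    xvec (n := n) (m+1) (σ * Equiv.swap j ⟨(j : ℕ)+1, by omega⟩) ρ k = xvec (m+1) σ ρ k := by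
  funext i
  rw [xvec, xvec]
  by_cases h : (i : ℕ) < m + 1
  · rw [dif_pos h, dif_pos h]
    have hsymm : (σ * Equiv.swap j ⟨(j : ℕ)+1, by omega⟩).symm ⟨(i : ℕ), h⟩
        = Equiv.swap j ⟨(j : ℕ)+1, by omega⟩ (σ.symm ⟨(i : ℕ), h⟩) := by
      rw [Equiv.Perm.mul_def, Equiv.symm_trans_apply, Equiv.symm_swap]
    rw [hsymm]
    have hle : Equiv.swap j ⟨(j : ℕ)+1, by omega⟩ (σ.symm ⟨(i : ℕ), h⟩) ≤ k
        ↔ σ.symm ⟨(i : ℕ), h⟩ ≤ k := by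
      have hkj : (k : ℕ) ≠ (j : ℕ) := fun hc => hk (Fin.ext hc)
      set z := σ.symm ⟨(i : ℕ), h⟩ with hz
      by_cases hz1 : z = j
      · rw [hz1, Equiv.swap_apply_left, Fin.le_def, Fin.le_def]
        show ((⟨(j : ℕ)+1, _⟩ : Fin (m+1)) : ℕ) ≤ (k : ℕ) ↔ (j : ℕ) ≤ (k : ℕ)
        simp only []
        omega
      · by_cases hz2 : z = ⟨(j : ℕ)+1, by omega⟩
        · rw [hz2, Equiv.swap_apply_right, Fin.le_def, Fin.le_def]
          show (j : ℕ) ≤ (k : ℕ) ↔ ((⟨(j : ℕ)+1, _⟩ : Fin (m+1)) : ℕ) ≤ (k : ℕ)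
          simp only []
          omega
        · rw [Equiv.swap_apply_of_ne_of_ne hz1 hz2]
    rw [if_congr hle rfl rfl]
  · rw [dif_neg h, dif_neg h]

lemma xvec_flip {m : ℕ} (σ : Equiv.Perm (Fin (m+1))) (ρ : Fin (m+1) → Bool)
    (k : Fin (m+1)) (hk : k ≠ Fin.last m) :
    xvec (n := n) (m+1) σ
      (Function.update ρ (σ (Fin.last m)) (!ρ (σ (Fin.last m)))) k = xvec (m+1) σ ρ k := by
  funext i
  rw [xvec, xvec]
  by_cases h : (i : ℕ) < m + 1
  · rw [dif_pos h, dif_pos h]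
    by_cases hle : σ.symm ⟨(i : ℕ), h⟩ ≤ k
    · rw [if_pos hle, if_pos hle]
      have hne : (⟨(i : ℕ), h⟩ : Fin (m+1)) ≠ σ (Fin.last m) := by
        intro hc
        have h2 : σ.symm ⟨(i : ℕ), h⟩ = Fin.last m := by rw [hc, Equiv.symm_apply_apply]
        rw [h2] at hle
        have hlt : k < Fin.last m := lt_of_le_of_ne (Fin.le_last k) hk
        exact absurd (lt_of_le_of_lt hle hlt) (lt_irrefl _)
      rw [Function.update_of_ne hne]
    · rw [if_neg hle, if_neg hle]
  · rw [dif_neg h, dif_neg h]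

def upPerm {m : ℕ} (σ : Equiv.Perm (Fin m)) : Equiv.Perm (Fin (m+1)) where
  toFun := Fin.lastCases (Fin.last m) (fun k => (σ k).castSucc)
  invFun := Fin.lastCases (Fin.last m) (fun k => (σ.symm k).castSucc)
  left_inv := by
    intro k
    induction k using Fin.lastCases with
    | last => simp
    | cast k => simp
  right_inv := by
    intro k
    induction k using Fin.lastCases with
    | last => simp
    | cast k => simp

@[simp] lemma upPerm_castSucc {m : ℕ} (σ : Equiv.Perm (Fin m)) (k : Fin m) :
    upPerm σ k.castSucc = (σ k).castSucc := by
  simp only [upPerm, Equiv.coe_fn_mk, Fin.lastCases_castSucc]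

@[simp] lemma upPerm_last {m : ℕ} (σ : Equiv.Perm (Fin m)) :
    upPerm σ (Fin.last m) = Fin.last m := by
  simp only [upPerm, Equiv.coe_fn_mk, Fin.lastCases_last]

@[simp] lemma upPerm_symm_castSucc {m : ℕ} (σ : Equiv.Perm (Fin m)) (k : Fin m) :
    (upPerm σ).symm k.castSucc = (σ.symm k).castSucc := by
  simp only [upPerm, Equiv.symm, Equiv.coe_fn_mk, Fin.lastCases_castSucc]

@[simp] lemma upPerm_symm_last {m : ℕ} (σ : Equiv.Perm (Fin m)) :
    (upPerm σ).symm (Fin.last m) = Fin.last m := by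
  simp only [upPerm, Equiv.symm, Equiv.coe_fn_mk, Fin.lastCases_last]

def extρ {m : ℕ} (ρ : Fin m → Bool) : Fin (m+1) → Bool := Fin.lastCases true ρ

@[simp] lemma extρ_castSucc {m : ℕ} (ρ : Fin m → Bool) (k : Fin m) :
    extρ ρ k.castSucc = ρ k := by rw [extρ, Fin.lastCases_castSucc]

@[simp] lemma extρ_last {m : ℕ} (ρ : Fin m → Bool) :
    extρ ρ (Fin.last m) = true := by rw [extρ, Fin.lastCases_last]

lemma xvec_up {m : ℕ} (σ : Equiv.Perm (Fin m)) (ρ : Fin m → Bool) (k : Fin m) :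
    xvec (n := n) (m+1) (upPerm σ) (extρ ρ) k.castSucc = xvec m σ ρ k := by
  funext i
  rw [xvec, xvec]
  by_cases h : (i : ℕ) < m
  · have h1 : (i : ℕ) < m + 1 := by omega
    rw [dif_pos h1, dif_pos h]
    have hcast : (⟨(i : ℕ), h1⟩ : Fin (m+1)) = (⟨(i : ℕ), h⟩ : Fin m).castSucc := rfl
    rw [hcast, upPerm_symm_castSucc, extρ_castSucc]
    rw [if_congr (Fin.castSucc_le_castSucc_iff) rfl rfl]
  · by_cases h1 : (i : ℕ) < m + 1
    · rw [dif_pos h1, dif_neg h]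
      have hlast : (⟨(i : ℕ), h1⟩ : Fin (m+1)) = Fin.last m := by
        ext
        show (i : ℕ) = m
        omega
      rw [hlast, upPerm_symm_last, if_neg (not_le_of_gt (Fin.castSucc_lt_last k))]
    · rw [dif_neg h1, dif_neg h]

def downPerm {m : ℕ} (σ : Equiv.Perm (Fin (m+1))) (hσ : σ (Fin.last m) = Fin.last m) :
    Equiv.Perm (Fin m) where
  toFun k := (σ k.castSucc).castPred (fun hc =>
    (Fin.castSucc_lt_last k).ne (σ.injective (hc.trans hσ.symm)))
  invFun k := (σ.symm k.castSucc).castPred (fun hc =>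
    (Fin.castSucc_lt_last k).ne (by rw [← hσ, ← hc, Equiv.apply_symm_apply]))
  left_inv := by
    intro k
    apply Fin.castSucc_injective
    rw [Fin.castSucc_castPred, Fin.castSucc_castPred, Equiv.symm_apply_apply]
  right_inv := by
    intro k
    apply Fin.castSucc_injective
    rw [Fin.castSucc_castPred, Fin.castSucc_castPred, Equiv.apply_symm_apply]

lemma up_down {m : ℕ} (σ : Equiv.Perm (Fin (m+1))) (hσ : σ (Fin.last m) = Fin.last m) :
    upPerm (downPerm σ hσ) = σ := by
  apply Equiv.ext
  intro k
  induction k using Fin.lastCases with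
  | last => rw [upPerm_last, hσ]
  | cast k =>
    rw [upPerm_castSucc]
    simp only [downPerm, Equiv.coe_fn_mk, Fin.castSucc_castPred]

lemma extρ_comp {m : ℕ} (ρ : Fin (m+1) → Bool) (h : ρ (Fin.last m) = true) :
    extρ (fun k => ρ k.castSucc) = ρ := by
  funext k
  induction k using Fin.lastCases with
  | last => rw [extρ_last, h]
  | cast k => rw [extρ_castSucc]

def gmove {m : ℕ} (a : (Equiv.Perm (Fin (m+1)) × (Fin (m+1) → Bool)) × Fin (m+1)) :
    (Equiv.Perm (Fin (m+1)) × (Fin (m+1) → Bool)) × Fin (m+1) :=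
  if h : (a.2 : ℕ) < m then
    ((a.1.1 * Equiv.swap a.2 ⟨(a.2 : ℕ)+1, by omega⟩, a.1.2), a.2)
  else
    ((a.1.1, Function.update a.1.2 (a.1.1 (Fin.last m)) (!a.1.2 (a.1.1 (Fin.last m)))), a.2)

lemma gmove_invol {m : ℕ} (a : (Equiv.Perm (Fin (m+1)) × (Fin (m+1) → Bool)) × Fin (m+1)) :
    gmove (gmove a) = a := by
  obtain ⟨⟨σ, ρ⟩, j⟩ := a
  by_cases h : (j : ℕ) < m
  · simp only [gmove, dif_pos h]
    rw [mul_assoc, Equiv.swap_mul_self, mul_one]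
  · simp only [gmove, dif_neg h]
    rw [Function.update_self, Bool.not_not, Function.update_idem, Function.update_eq_self]

lemma gmove_ne {m : ℕ} (a : (Equiv.Perm (Fin (m+1)) × (Fin (m+1) → Bool)) × Fin (m+1)) :
    gmove a ≠ a := by
  obtain ⟨⟨σ, ρ⟩, j⟩ := a
  by_cases h : (j : ℕ) < m
  · simp only [gmove, dif_pos h]
    intro hc
    have h1 : σ * Equiv.swap j ⟨(j : ℕ)+1, by omega⟩ = σ :=
      congrArg (fun p => p.1.1) hc
    have h2 : Equiv.swap j ⟨(j : ℕ)+1, by omega⟩ = 1 := by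
      have := h1.trans (mul_one σ).symm
      exact mul_left_cancel this
    have h3 : j = (⟨(j : ℕ)+1, by omega⟩ : Fin (m+1)) := by
      rwa [Equiv.swap_eq_one_iff] at h2
    rw [Fin.ext_iff] at h3
    simp only [] at h3
    omega
  · simp only [gmove, dif_neg h]
    intro hc
    have h1 : Function.update ρ (σ (Fin.last m)) (!ρ (σ (Fin.last m))) = ρ :=
      congrArg (fun p => p.1.2) hc
    have h2 := congrFun h1 (σ (Fin.last m))
    rw [Function.update_self] at h2
    exact (Bool.not_ne_self _) h2

lemma gmove_pres (lam : (Fin n → SignType) → ℤ) {m : ℕ}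
    (a : (Equiv.Perm (Fin (m+1)) × (Fin (m+1) → Bool)) × Fin (m+1))
    (hc : (Hp a.1 ∧ door lam a.1 a.2) ∧ intr a) :
    (Hp (gmove a).1 ∧ door lam (gmove a).1 (gmove a).2) ∧ intr (gmove a) := by
  obtain ⟨⟨σ, ρ⟩, j⟩ := a
  obtain ⟨⟨h1, h2⟩, h3⟩ := hc
  by_cases h : (j : ℕ) < m
  · simp only [gmove, dif_pos h]
    refine ⟨⟨h1, ?_⟩, Or.inl h⟩
    rw [door] at h2 ⊢
    have heq : val lam (m+1) (σ * Equiv.swap j ⟨(j : ℕ)+1, by omega⟩) ρ ∘ j.succAbove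
        = val lam (m+1) σ ρ ∘ j.succAbove := by
      funext i
      show val lam (m+1) _ ρ (j.succAbove i) = val lam (m+1) σ ρ (j.succAbove i)
      rw [val, val, xvec_swap σ ρ j h _ (Fin.succAbove_ne j i)]
    exact heq ▸ h2
  · have hσ : σ (Fin.last m) ≠ Fin.last m := by
      rcases h3 with h3 | h3
      · exact absurd h3 h
      · exact h3
    simp only [gmove, dif_neg h]
    refine ⟨⟨?_, ?_⟩, Or.inr hσ⟩
    · show Function.update ρ _ _ (Fin.last m) = true
      rw [Function.update_of_ne (Ne.symm hσ)]
      exact h1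
    · have hj : j = Fin.last m := by
        ext
        show (j : ℕ) = m
        have := j.isLt
        omega
      rw [door] at h2 ⊢
      have heq : val lam (m+1) σ
            (Function.update ρ (σ (Fin.last m)) (!ρ (σ (Fin.last m)))) ∘ j.succAbove
          = val lam (m+1) σ ρ ∘ j.succAbove := by
        funext i
        show val lam (m+1) σ _ (j.succAbove i) = val lam (m+1) σ ρ (j.succAbove i)
        have hne : j.succAbove i ≠ Fin.last m := by
          rw [hj]
          exact Fin.succAbove_ne _ i
        rw [val, val, xvec_flip σ ρ _ hne]
      exact heq ▸ h2

lemma boundary_card (lam : (Fin n → SignType) → ℤ) {m : ℕ} :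
    ((Finset.univ.filter
        fun a : (Equiv.Perm (Fin (m+1)) × (Fin (m+1) → Bool)) × Fin (m+1) =>
      (Hp a.1 ∧ door lam a.1 a.2) ∧ ¬ intr a).card) = A lam m := by
  rw [A]
  symm
  apply Finset.card_bij (i := fun F _ => ((upPerm F.1, extρ F.2), Fin.last m))
  · intro F hF
    rw [Finset.mem_filter] at hF ⊢
    have himg : val lam (m+1) (upPerm F.1) (extρ F.2) ∘ (Fin.last m).succAbove
        = val lam m F.1 F.2 := by
      funext k
      show val lam (m+1) (upPerm F.1) (extρ F.2) ((Fin.last m).succAbove k) = _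
      rw [Fin.succAbove_last, val, val, xvec_up]
    refine ⟨Finset.mem_univ _, ⟨⟨?_, ?_⟩, ?_⟩⟩
    · show extρ F.2 (Fin.last m) = true
      simp
    · show door lam (upPerm F.1, extρ F.2) (Fin.last m)
      rw [door]
      show P 1 m (Finset.image (val lam (m+1) (upPerm F.1) (extρ F.2)
        ∘ (Fin.last m).succAbove) Finset.univ)
      rw [himg]
      exact hF.2
    · rw [intr]
      push_neg
      constructor
      · show m ≤ (((upPerm F.1, extρ F.2), Fin.last m).2 : ℕ)
        simp
      · show upPerm F.1 (Fin.last m) = Fin.last m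
        simp
  · intro a _ b _ hab
    have h1 : upPerm a.1 = upPerm b.1 := congrArg (fun x => x.1.1) hab
    have h2 : extρ a.2 = extρ b.2 := congrArg (fun x => x.1.2) hab
    have hσ : a.1 = b.1 := by
      apply Equiv.ext
      intro k
      have h3 : upPerm a.1 k.castSucc = upPerm b.1 k.castSucc := by rw [h1]
      rw [upPerm_castSucc, upPerm_castSucc] at h3
      exact Fin.castSucc_injective m h3
    have hρ : a.2 = b.2 := by
      funext k
      have := congrFun h2 k.castSucc
      rwa [extρ_castSucc, extρ_castSucc] at this
    exact Prod.ext hσ hρ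
  · intro b hb
    obtain ⟨⟨σ, ρ⟩, j⟩ := b
    rw [Finset.mem_filter] at hb
    obtain ⟨-, ⟨hHp, hdoor⟩, hni⟩ := hb
    rw [intr] at hni
    push_neg at hni
    obtain ⟨hb2, hσ⟩ := hni
    have hj : j = Fin.last m := by
      ext
      show (j : ℕ) = m
      have := j.isLt
      simp only [not_lt] at hb2
      omega
    have hHp' : ρ (Fin.last m) = true := hHp
    refine ⟨(downPerm σ hσ, fun k => ρ k.castSucc), Finset.mem_filter.2 ⟨Finset.mem_univ _, ?_⟩, ?_⟩
    · show alt lam 1 m (downPerm σ hσ, fun k => ρ k.castSucc)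
      rw [alt]
      rw [door, hj] at hdoor
      have himg : val lam (m+1) σ ρ ∘ (Fin.last m).succAbove
          = val lam m (downPerm σ hσ) (fun k => ρ k.castSucc) := by
        funext k
        show val lam (m+1) σ ρ ((Fin.last m).succAbove k) = _
        rw [Fin.succAbove_last]
        conv_lhs => rw [← up_down σ hσ, ← extρ_comp ρ hHp']
        rw [val, val, xvec_up]
      rw [himg] at hdoor
      exact hdoor
    · show ((upPerm (downPerm σ hσ), extρ (fun k => ρ k.castSucc)), Fin.last m) = ((σ, ρ), j)
      rw [up_down, extρ_comp ρ hHp', hj]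

lemma step {m : ℕ} (lam : (Fin n → SignType) → ℤ) (hm : m + 1 ≤ n)
    (hoddl : ∀ x : Fin n → SignType, x ≠ 0 → lam (-x) = -lam x)
    (hcomp : ∀ x y : Fin n → SignType, x ≠ 0 →
      (∀ i, x i ≠ 0 → x i = y i) → lam x + lam y ≠ 0) :
    ((A lam (m+1) : ZMod 2)) = (A lam m : ZMod 2) := by
  have negE_invol : Function.Involutive
      (fun F : Equiv.Perm (Fin (m+1)) × (Fin (m+1) → Bool) => (F.1, fun k => !F.2 k)) := by
    intro F
    refine Prod.ext rfl ?_
    funext k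
    simp
  have hHp_neg : ∀ F : Equiv.Perm (Fin (m+1)) × (Fin (m+1) → Bool),
      Hp (F.1, fun k => !F.2 k) ↔ ¬ Hp F := by
    intro F
    show (!F.2 (Fin.last m)) = true ↔ ¬ (F.2 (Fin.last m) = true)
    cases h : F.2 (Fin.last m) <;> simp
  have halt_neg : ∀ F : Equiv.Perm (Fin (m+1)) × (Fin (m+1) → Bool),
      alt lam (-1) (m+1) (F.1, fun k => !F.2 k) ↔ alt lam 1 (m+1) F := by
    intro F
    rw [alt, alt]
    have hval : val lam (m+1) F.1 (fun k => !F.2 k)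
        = fun j => -(val lam (m+1) F.1 F.2 j) := by
      funext j
      rw [val, xvec_neg, hoddl _ (xvec_ne_zero hm F.1 F.2 j), val]
    show P (-1) (m+1) (Finset.image (val lam (m+1) F.1 (fun k => !F.2 k)) Finset.univ) ↔ _
    rw [hval]
    have himg : Finset.image (fun j => -(val lam (m+1) F.1 F.2 j)) Finset.univ
        = Finset.image (fun x : ℤ => -x)
            (Finset.image (val lam (m+1) F.1 F.2) Finset.univ) := by
      rw [Finset.image_image]
      rfl
    rw [himg, P_neg]
    norm_num
  have key : ∀ F : Equiv.Perm (Fin (m+1)) × (Fin (m+1) → Bool),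
      (((Finset.univ.filter fun j => door lam F j).card : ZMod 2))
        = (if alt lam 1 (m+1) F then (1 : ZMod 2) else 0)
          + (if alt lam (-1) (m+1) F then (1 : ZMod 2) else 0) := by
    intro F
    have hpf := perFacet m (val lam (m+1) F.1 F.2) (val_add_ne lam hcomp hm F.1 F.2)
    have hfe : (Finset.univ.filter fun j => door lam F j)
        = (Finset.univ.filter fun j : Fin (m+1) =>
            P 1 m (Finset.image (val lam (m+1) F.1 F.2 ∘ j.succAbove) Finset.univ)) := rfl
    rw [hfe]
    by_cases h1 : alt lam 1 (m+1) F
    · by_cases h2 : alt lam (-1) (m+1) F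
      · exact absurd (P_not_both h1 h2) (fun h => h)
      · rw [if_pos h1, if_neg h2, add_zero, cast_eq_one_iff_odd, hpf]
        exact Or.inl h1
    · by_cases h2 : alt lam (-1) (m+1) F
      · rw [if_neg h1, if_pos h2, zero_add, cast_eq_one_iff_odd, hpf]
        exact Or.inr h2
      · rw [if_neg h1, if_neg h2, add_zero, cast_eq_zero_iff_even, hpf]
        rintro (h | h)
        · exact h1 h
        · exact h2 h
  have h1 : ((A lam (m+1) : ZMod 2))
      = ∑ F : Equiv.Perm (Fin (m+1)) × (Fin (m+1) → Bool),
          (if alt lam 1 (m+1) F then (1 : ZMod 2) else 0) := by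
    rw [A, Finset.card_filter, Nat.cast_sum]
    exact Finset.sum_congr rfl (fun F _ => by split_ifs <;> simp)
  have h2 : ∑ F : Equiv.Perm (Fin (m+1)) × (Fin (m+1) → Bool),
        (if alt lam 1 (m+1) F then (1 : ZMod 2) else 0)
      = (∑ F : Equiv.Perm (Fin (m+1)) × (Fin (m+1) → Bool),
          (if Hp F ∧ alt lam 1 (m+1) F then (1 : ZMod 2) else 0))
        + ∑ F : Equiv.Perm (Fin (m+1)) × (Fin (m+1) → Bool),
          (if ¬ Hp F ∧ alt lam 1 (m+1) F then (1 : ZMod 2) else 0) := by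
    rw [← Finset.sum_add_distrib]
    refine Finset.sum_congr rfl (fun F _ => ?_)
    by_cases h : Hp F <;> by_cases h' : alt lam 1 (m+1) F <;> simp [h, h']
  have h3 : ∑ F : Equiv.Perm (Fin (m+1)) × (Fin (m+1) → Bool),
        (if ¬ Hp F ∧ alt lam 1 (m+1) F then (1 : ZMod 2) else 0)
      = ∑ F : Equiv.Perm (Fin (m+1)) × (Fin (m+1) → Bool),
          (if Hp F ∧ alt lam (-1) (m+1) F then (1 : ZMod 2) else 0) := by
    apply Fintype.sum_equiv (Function.Involutive.toPerm _ negE_invol)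
    intro F
    have he : (Function.Involutive.toPerm _ negE_invol) F = (F.1, fun k => !F.2 k) := rfl
    rw [he]
    refine if_congr ?_ rfl rfl
    rw [hHp_neg F, halt_neg F]
  have h4 : (∑ F : Equiv.Perm (Fin (m+1)) × (Fin (m+1) → Bool),
          (if Hp F ∧ alt lam 1 (m+1) F then (1 : ZMod 2) else 0))
        + ∑ F : Equiv.Perm (Fin (m+1)) × (Fin (m+1) → Bool),
          (if Hp F ∧ alt lam (-1) (m+1) F then (1 : ZMod 2) else 0)
      = ∑ F : Equiv.Perm (Fin (m+1)) × (Fin (m+1) → Bool),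
          (if Hp F then (((Finset.univ.filter fun j => door lam F j).card : ZMod 2)) else 0) := by
    rw [← Finset.sum_add_distrib]
    refine Finset.sum_congr rfl (fun F _ => ?_)
    by_cases h : Hp F
    · rw [if_pos h, key F]
      by_cases h1 : alt lam 1 (m+1) F <;> by_cases h2 : alt lam (-1) (m+1) F <;>
        simp [h, h1, h2]
    · simp [h]
  have h5 : ∑ F : Equiv.Perm (Fin (m+1)) × (Fin (m+1) → Bool),
          (if Hp F then (((Finset.univ.filter fun j => door lam F j).card : ZMod 2)) else 0)
      = ∑ a : (Equiv.Perm (Fin (m+1)) × (Fin (m+1) → Bool)) × Fin (m+1),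
          (if Hp a.1 ∧ door lam a.1 a.2 then (1 : ZMod 2) else 0) := by
    conv_rhs => rw [Fintype.sum_prod_type]
    refine Finset.sum_congr rfl (fun F _ => ?_)
    by_cases h : Hp F
    · rw [if_pos h, Finset.card_filter, Nat.cast_sum]
      refine Finset.sum_congr rfl (fun j _ => ?_)
      by_cases h2 : door lam F j <;> simp [h, h2]
    · simp [h]
  have h6 : ∑ a : (Equiv.Perm (Fin (m+1)) × (Fin (m+1) → Bool)) × Fin (m+1),
          (if Hp a.1 ∧ door lam a.1 a.2 then (1 : ZMod 2) else 0)
      = (∑ a : (Equiv.Perm (Fin (m+1)) × (Fin (m+1) → Bool)) × Fin (m+1),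
          (if (Hp a.1 ∧ door lam a.1 a.2) ∧ intr a then (1 : ZMod 2) else 0))
        + ∑ a : (Equiv.Perm (Fin (m+1)) × (Fin (m+1) → Bool)) × Fin (m+1),
          (if (Hp a.1 ∧ door lam a.1 a.2) ∧ ¬ intr a then (1 : ZMod 2) else 0) := by
    rw [← Finset.sum_add_distrib]
    refine Finset.sum_congr rfl (fun a _ => ?_)
    by_cases h : Hp a.1 ∧ door lam a.1 a.2 <;> by_cases h' : intr a <;> simp [h, h']
  have h7 : ∑ a : (Equiv.Perm (Fin (m+1)) × (Fin (m+1) → Bool)) × Fin (m+1),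
          (if (Hp a.1 ∧ door lam a.1 a.2) ∧ intr a then (1 : ZMod 2) else 0) = 0 := by
    apply Finset.sum_involution (g := fun a _ => gmove a)
    · intro a _
      by_cases hc : (Hp a.1 ∧ door lam a.1 a.2) ∧ intr a
      · rw [if_pos hc, if_pos (gmove_pres lam a hc)]
        decide
      · have hc' : ¬ ((Hp (gmove a).1 ∧ door lam (gmove a).1 (gmove a).2) ∧ intr (gmove a)) := by
          intro hcg
          have := gmove_pres lam (gmove a) hcg
          rw [gmove_invol] at this
          exact hc this
        rw [if_neg hc, if_neg hc']
        decide
    · intro a _ _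
      exact gmove_ne a
    · intro a _
      exact Finset.mem_univ _
    · intro a _
      exact gmove_invol a
  have h8 : ∑ a : (Equiv.Perm (Fin (m+1)) × (Fin (m+1) → Bool)) × Fin (m+1),
          (if (Hp a.1 ∧ door lam a.1 a.2) ∧ ¬ intr a then (1 : ZMod 2) else 0)
      = ((A lam m : ZMod 2)) := by
    rw [← boundary_card lam (m := m), Finset.card_filter, Nat.cast_sum]
    refine Finset.sum_congr rfl (fun a _ => ?_)
    split_ifs <;> simp
  rw [h1, h2, h3, ← Finset.sum_add_distrib]
  rw [show (∑ F : Equiv.Perm (Fin (m+1)) × (Fin (m+1) → Bool),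
      ((if Hp F ∧ alt lam 1 (m+1) F then (1 : ZMod 2) else 0)
        + (if Hp F ∧ alt lam (-1) (m+1) F then (1 : ZMod 2) else 0)))
    = (∑ F : Equiv.Perm (Fin (m+1)) × (Fin (m+1) → Bool),
          (if Hp F ∧ alt lam 1 (m+1) F then (1 : ZMod 2) else 0))
        + ∑ F : Equiv.Perm (Fin (m+1)) × (Fin (m+1) → Bool),
          (if Hp F ∧ alt lam (-1) (m+1) F then (1 : ZMod 2) else 0) from
    Finset.sum_add_distrib]
  rw [h4, h5, h6, h7, h8, zero_add]

end OctTucker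

/-- Octahedral Tucker lemma. Sign vectors are modeled as `Fin n → SignType`;
`x ⪯ y` means every nonzero coordinate of `x` agrees with `y`. -/
theorem octahedral_tucker (s n : ℕ) (hs : 0 < s) (hn : 0 < n)
    (lam : (Fin n → SignType) → ℤ)
    (hrange : ∀ x : Fin n → SignType, x ≠ 0 → 1 ≤ |lam x| ∧ |lam x| ≤ (s : ℤ))
    (hodd : ∀ x : Fin n → SignType, x ≠ 0 → lam (-x) = -lam x)
    (hcomp : ∀ x y : Fin n → SignType, x ≠ 0 →
      (∀ i, x i ≠ 0 → x i = y i) → lam x + lam y ≠ 0) :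
    n ≤ s := by
  classical
  rcases n with _ | n'
  · exact absurd hn (lt_irrefl 0)
  -- all `A lam m` are odd
  have hAodd : ∀ m : ℕ, m ≤ n' + 1 → Odd (OctTucker.A lam m) := by
    intro m
    induction m with
    | zero => intro _; rw [OctTucker.A_zero]; exact odd_one
    | succ k ih =>
      intro hk
      have hih := ih (by omega)
      have hstep := OctTucker.step lam hk hodd hcomp
      rw [← OctTucker.cast_eq_one_iff_odd, hstep, OctTucker.cast_eq_one_iff_odd]
      exact hih
  have hA := hAodd (n' + 1) le_rfl
  have hne : (Finset.univ.filter (OctTucker.alt lam 1 (n' + 1))).Nonempty := by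
    rcases Finset.eq_empty_or_nonempty (Finset.univ.filter (OctTucker.alt lam 1 (n' + 1))) with h | h
    · exfalso
      rw [OctTucker.A, h] at hA
      simp at hA
    · exact h
  obtain ⟨F, hF⟩ := hne
  rw [Finset.mem_filter] at hF
  have halt := hF.2
  rw [OctTucker.alt] at halt
  obtain ⟨b, hb, hsign, him⟩ := halt
  -- each |b i| is the magnitude of a label
  have habs_le : ∀ i : Fin (n' + 1), |b i| ≤ (s : ℤ) := by
    intro i
    have hbi : b i ∈ Finset.image (OctTucker.val lam (n' + 1) F.1 F.2) Finset.univ := by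
      rw [him]
      exact Finset.mem_image_of_mem _ (Finset.mem_univ i)
    obtain ⟨j, -, hj⟩ := Finset.mem_image.1 hbi
    rw [← hj]
    rw [OctTucker.val]
    exact (hrange _ (OctTucker.xvec_ne_zero le_rfl F.1 F.2 j)).2
  have hgrow : ∀ i : Fin (n' + 1), (((i : ℕ) : ℤ) + 1) ≤ |b i| := by
    intro i
    induction i using Fin.induction with
    | zero =>
      have h0 := hsign 0
      simp only [Fin.val_zero, pow_zero, one_mul, mul_one] at h0
      simp only [Fin.val_zero, Nat.cast_zero, zero_add]
      rw [abs_of_pos h0]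
      omega
    | succ i ih =>
      have hlt' : |b i.castSucc| < |b i.succ| := hb (show i.castSucc < i.succ from Fin.castSucc_lt_succ)
      have h1 := ih
      rw [Fin.coe_castSucc] at h1
      rw [Fin.val_succ]
      push_cast
      push_cast at h1
      omega
  have hfin := hgrow (Fin.last n')
  rw [Fin.val_last] at hfin
  have hle := le_trans hfin (habs_le (Fin.last n'))
  omega
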